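/- arXiv:1512.05728 — 2 statements merged into one kernel-verified Lean document; each statement's English description precedes it below -/
import Mathlib

section
/- Let (Ω,Σ,η) be a finite measure space. If {ξₙ} ⊆ L¹(η) converges to 0 weakly in L¹(η) and ξₙ(x) → g₀(x) for η-almost every x, then g₀ = 0 η-a.e. and ξₙ → 0 in the norm of L¹(η). -/
open MeasureTheory Filter Topology
open scoped ENNReal

noncomputable section

namespace Paper

variable {Ω : Type*} [MeasurableSpace Ω]
variable {X : Type*} [NormedAddCommGroup X] [NormedSpace ℝ X]

/-- The signed measure `x* ∘ m` for a functional `x*` and vector measure `m`. -/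
def dualApply (m : VectorMeasure Ω X) (x : X →L[ℝ] ℝ) : SignedMeasure Ω :=
  m.mapRange x.toLinearMap.toAddMonoidHom x.continuous

/-- The semivariation `‖m‖(A)` of a vector measure. -/
def semivar (m : VectorMeasure Ω X) (A : Set Ω) : ℝ≥0∞ :=
  ⨆ x : {x : X →L[ℝ] ℝ // ‖x‖ ≤ 1}, (dualApply m x.1).totalVariation A

/-- `P` holds `‖m‖`-almost everywhere. -/
def MAE (m : VectorMeasure Ω X) (P : Ω → Prop) : Prop :=
  ∃ N : Set Ω, MeasurableSet N ∧ semivar m N = 0 ∧ ∀ ω ∉ N, P ω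

/-- The integral `∫_A f ds` of a real function with respect to a signed measure. -/
def sIntegral (s : SignedMeasure Ω) (f : Ω → ℝ) (A : Set Ω) : ℝ :=
  (∫ ω in A, f ω ∂s.toJordanDecomposition.posPart) -
    ∫ ω in A, f ω ∂s.toJordanDecomposition.negPart

/-- `f` is integrable with respect to the vector measure `m` (Bartle-Dunford-Schwartz). -/
def MIntegrable (m : VectorMeasure Ω X) (f : Ω → ℝ) : Prop :=
  Measurable f ∧
  (∀ x : X →L[ℝ] ℝ, Integrable f ((dualApply m x).totalVariation)) ∧
  (∀ A : Set Ω, MeasurableSet A →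
    ∃ v : X, ∀ x : X →L[ℝ] ℝ, x v = sIntegral (dualApply m x) f A)

open Classical in
/-- The vector integral `∫_A f dm ∈ X`. -/
def mIntegral (m : VectorMeasure Ω X) (f : Ω → ℝ) (A : Set Ω) : X :=
  if h : ∃ v : X, ∀ x : X →L[ℝ] ℝ, x v = sIntegral (dualApply m x) f A then h.choose
  else 0

/-- The norm of `L¹(m)`: `‖f‖ = sup_{‖x*‖ ≤ 1} ∫ |f| d|x*m|`. -/
def mNorm (m : VectorMeasure Ω X) (f : Ω → ℝ) : ℝ :=
  ⨆ x : {x : X →L[ℝ] ℝ // ‖x‖ ≤ 1}, ∫ ω, |f ω| ∂(dualApply m x.1).totalVariation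

/-- The vector measure `m` is separable: the pseudometric space `(Σ, d_m)`,
`d_m(A,B) = ‖m‖(A △ B)`, is separable. -/
def SeparableVM (m : VectorMeasure Ω X) : Prop :=
  ∃ D : Set (Set Ω), D.Countable ∧ (∀ B ∈ D, MeasurableSet B) ∧
    ∀ A : Set Ω, MeasurableSet A → ∀ ε : ℝ, 0 < ε →
      ∃ B ∈ D, semivar m (symmDiff A B) < ENNReal.ofReal ε

section FunctionSpace

variable {S : Type*} [MeasurableSpace S]

/-- `T` is a bounded linear functional on the function space determined by the
membership predicate `mem` and the norm `nrm`. -/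
def IsBddLinFunctional (mem : (S → ℝ) → Prop) (nrm : (S → ℝ) → ℝ)
    (T : (S → ℝ) → ℝ) : Prop :=
  (∀ f g, mem f → mem g → T (f + g) = T f + T g) ∧
  (∀ (c : ℝ) (f), mem f → T (c • f) = c * T f) ∧
  (∃ C : ℝ, ∀ f, mem f → |T f| ≤ C * nrm f)

/-- `f` is a weakly null sequence in the function space `(mem, nrm)`. -/
def WeaklyNullSeq (mem : (S → ℝ) → Prop) (nrm : (S → ℝ) → ℝ) (f : ℕ → S → ℝ) : Prop :=
  ∀ T : (S → ℝ) → ℝ, IsBddLinFunctional mem nrm T →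
    Tendsto (fun n => T (f n)) atTop (nhds 0)

/-- The set `K` has uniformly absolutely continuous norm in the function space with
norm `nrm` over the measure `μ`. -/
def UnifACNorm (μ : Measure S) (nrm : (S → ℝ) → ℝ) (K : Set (S → ℝ)) : Prop :=
  ∀ ε : ℝ, 0 < ε → ∃ δ : ℝ, 0 < δ ∧ ∀ A : Set S, MeasurableSet A →
    μ A < ENNReal.ofReal δ → ∀ f ∈ K, nrm (A.indicator f) ≤ ε

/-- The subsequence splitting property for the function space `(mem, nrm)` over `μ`. -/
def HasSSP (μ : Measure S) (mem : (S → ℝ) → Prop) (nrm : (S → ℝ) → ℝ) : Prop :=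
  ∀ f : ℕ → S → ℝ, (∀ n, mem (f n)) → (∃ C : ℝ, ∀ n, nrm (f n) ≤ C) →
    ∃ σ : ℕ → ℕ, StrictMono σ ∧
      ∃ g h : ℕ → S → ℝ,
        (∀ n, mem (g n)) ∧ (∀ n, mem (h n)) ∧
        (∀ n, f (σ n) = g n + h n) ∧
        (∀ n, (fun s => g n s * h n s) =ᵐ[μ] 0) ∧
        UnifACNorm μ nrm (Set.range g) ∧
        (∀ i j, i ≠ j → (fun s => h i s * h j s) =ᵐ[μ] 0)

/-- The weak Banach-Saks property for the function space `(mem, nrm)`. -/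
def HasWBS (mem : (S → ℝ) → Prop) (nrm : (S → ℝ) → ℝ) : Prop :=
  ∀ f : ℕ → S → ℝ, (∀ n, mem (f n)) → WeaklyNullSeq mem nrm f →
    ∃ σ : ℕ → ℕ, StrictMono σ ∧
      Tendsto (fun n : ℕ => nrm ((n : ℝ)⁻¹ • ∑ k ∈ Finset.range n, f (σ k))) atTop (nhds 0)

end FunctionSpace

/-- A Banach function space over `(S, μ)`: an (abstract) normed space `X` together with
a linear embedding `J` into measurable functions on `S`, separating points modulo
`μ`-null sets and satisfying the ideal property. -/
structure BFS (S : Type*) [MeasurableSpace S] (μ : Measure S)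
    (X : Type*) [NormedAddCommGroup X] [NormedSpace ℝ X] where
  J : X →ₗ[ℝ] (S → ℝ)
  aemeasurable : ∀ x : X, AEMeasurable (J x) μ
  eq_zero : ∀ x : X, J x =ᵐ[μ] 0 → x = 0
  ideal : ∀ (x : X) (g : S → ℝ), AEMeasurable g μ →
    (∀ᵐ s ∂μ, |g s| ≤ |J x s|) → ∃ y : X, J y =ᵐ[μ] g ∧ ‖y‖ ≤ ‖x‖

variable {S : Type*} [MeasurableSpace S] {μ : Measure S}

/-- The set `K ⊆ X` has uniformly absolutely continuous norm in the B.f.s. `X`. -/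
def BFS.UnifAC (B : BFS S μ X) (K : Set X) : Prop :=
  ∀ ε : ℝ, 0 < ε → ∃ δ : ℝ, 0 < δ ∧ ∀ A : Set S, MeasurableSet A →
    μ A < ENNReal.ofReal δ → ∀ x ∈ K, ∀ y : X, B.J y =ᵐ[μ] A.indicator (B.J x) → ‖y‖ ≤ ε

/-- The B.f.s. `X` has absolutely continuous norm. -/
def BFS.ACNorm (B : BFS S μ X) : Prop :=
  ∀ x : X, ∀ ε : ℝ, 0 < ε → ∃ δ : ℝ, 0 < δ ∧ ∀ A : Set S, MeasurableSet A →
    μ A < ENNReal.ofReal δ → ∀ y : X, B.J y =ᵐ[μ] A.indicator (B.J x) → ‖y‖ ≤ ε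

/-- The subsequence splitting property for the B.f.s. `X`. -/
def BFS.SSP (B : BFS S μ X) : Prop :=
  ∀ f : ℕ → X, (∃ C : ℝ, ∀ n, ‖f n‖ ≤ C) →
    ∃ σ : ℕ → ℕ, StrictMono σ ∧
      ∃ g h : ℕ → X,
        (∀ n, f (σ n) = g n + h n) ∧
        (∀ n, (fun s => B.J (g n) s * B.J (h n) s) =ᵐ[μ] 0) ∧
        B.UnifAC (Set.range g) ∧
        (∀ i j, i ≠ j → (fun s => B.J (h i) s * B.J (h j) s) =ᵐ[μ] 0)

/-- The weak Banach-Saks property for a normed space `Z`: every weakly null sequence has a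
subsequence whose arithmetic means converge to zero in norm. -/
def WeakBanachSaks (Z : Type*) [NormedAddCommGroup Z] [NormedSpace ℝ Z] : Prop :=
  ∀ z : ℕ → Z, (∀ φ : Z →L[ℝ] ℝ, Tendsto (fun n => φ (z n)) atTop (nhds 0)) →
    ∃ σ : ℕ → ℕ, StrictMono σ ∧
      Tendsto (fun n : ℕ => ‖(n : ℝ)⁻¹ • ∑ k ∈ Finset.range n, z (σ k)‖) atTop (nhds 0)



section Statement11Aux

set_option maxHeartbeats 1000000
set_option synthInstance.maxHeartbeats 1000000
set_option linter.unusedSectionVars false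

variable {Ω' : Type*} [MeasurableSpace Ω'] {η : Measure Ω'} [IsFiniteMeasure η]

lemma integral_abs_le_of_eLpNorm_le {h : Ω' → ℝ} (hint : Integrable h η) {ε : ℝ} (hε : 0 ≤ ε)
    (hle : eLpNorm h 1 η ≤ ENNReal.ofReal ε) : ∫ ω, |h ω| ∂η ≤ ε := by
  rw [eLpNorm_one_eq_lintegral_enorm, ← ofReal_integral_norm_eq_lintegral_enorm hint] at hle
  have h2 : ∫ ω, ‖h ω‖ ∂η ≤ ε := (ENNReal.ofReal_le_ofReal_iff hε).mp hle
  simpa [Real.norm_eq_abs] using h2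

lemma fin_uac (ξ : ℕ → Ω' → ℝ) (hξ : ∀ n, Integrable (ξ n) η) (N : ℕ) {ε : ℝ} (hε : 0 < ε) :
    ∃ δ : ℝ, 0 < δ ∧ ∀ n ≤ N, ∀ A : Set Ω', MeasurableSet A → η A ≤ ENNReal.ofReal δ →
      eLpNorm (A.indicator (ξ n)) 1 η ≤ ENNReal.ofReal ε := by
  induction N with
  | zero =>
    obtain ⟨δ, hδ, h⟩ := (memLp_one_iff_integrable.mpr (hξ 0)).eLpNorm_indicator_le le_rfl
      ENNReal.one_ne_top hε
    exact ⟨δ, hδ, fun n hn A hA hAδ => by interval_cases n; exact h A hA hAδ⟩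
  | succ N ih =>
    obtain ⟨δ₁, hδ₁, h₁⟩ := ih
    obtain ⟨δ₂, hδ₂, h₂⟩ := (memLp_one_iff_integrable.mpr (hξ (N + 1))).eLpNorm_indicator_le
      le_rfl ENNReal.one_ne_top hε
    refine ⟨min δ₁ δ₂, lt_min hδ₁ hδ₂, fun n hn A hA hAδ => ?_⟩
    rcases Nat.lt_or_ge n (N + 1) with h | h
    · exact h₁ n (Nat.lt_succ_iff.mp h) A hA
        (hAδ.trans (ENNReal.ofReal_le_ofReal (min_le_left _ _)))
    · have : n = N + 1 := le_antisymm hn h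
      subst this
      exact h₂ A hA (hAδ.trans (ENNReal.ofReal_le_ofReal (min_le_right _ _)))

/-- Vitali-Hahn-Saks style uniform absolute continuity, via Baire category. -/
lemma uac (ξ : ℕ → Ω' → ℝ) (hm : ∀ n, StronglyMeasurable (ξ n)) (hξ : ∀ n, Integrable (ξ n) η)
    (hset : ∀ A : Set Ω', MeasurableSet A → Tendsto (fun n => ∫ ω in A, ξ n ω ∂η) atTop (𝓝 0))
    {ε : ℝ} (hε : 0 < ε) :
    ∃ δ : ℝ, 0 < δ ∧ ∀ n, ∀ A : Set Ω', MeasurableSet A → η A ≤ ENNReal.ofReal δ →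
      |∫ ω in A, ξ n ω ∂η| ≤ ε := by
  haveI : Fact ((1:ℝ≥0∞) ≤ 1) := ⟨le_rfl⟩
  set e : ℝ := ε/3 with he
  have he0 : 0 < e := by positivity
  set S : Set (Lp ℝ 1 η) := {f | ∀ᵐ ω ∂η, (f : Ω' → ℝ) ω = 0 ∨ (f : Ω' → ℝ) ω = 1} with hSdef
  have hSint : ∀ n, ∀ f : Lp ℝ 1 η, f ∈ S → Integrable (fun ω => ξ n ω * (f : Ω' → ℝ) ω) η := by
    intro n f hf
    refine Integrable.mono (hξ n) ((hm n).mul (Lp.stronglyMeasurable f)).aestronglyMeasurable ?_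
    filter_upwards [hf] with ω hω
    rcases hω with h | h <;> simp [h, abs_nonneg]
  set Φ : ℕ → Lp ℝ 1 η → ℝ := fun n f => ∫ ω, ξ n ω * (f : Ω' → ℝ) ω ∂η with hΦdef
  have hΦind : ∀ (n : ℕ) (A : Set Ω'), MeasurableSet A → ∀ f : Lp ℝ 1 η,
      (f : Ω' → ℝ) =ᵐ[η] A.indicator (fun _ => 1) → Φ n f = ∫ ω in A, ξ n ω ∂η := by
    intro n A hA f hfA
    rw [← integral_indicator hA]
    refine integral_congr_ae ?_
    filter_upwards [hfA] with ω hω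
    rw [hω]
    by_cases h : ω ∈ A <;> simp [Set.indicator_apply, h]
  have hΦeq : ∀ (n : ℕ) (f : Lp ℝ 1 η), f ∈ S →
      Φ n f = ∫ ω in {ω | (f : Ω' → ℝ) ω = 1}, ξ n ω ∂η := by
    intro n f hf
    refine hΦind n _ ((Lp.stronglyMeasurable f).measurable (measurableSet_singleton 1)) f ?_
    filter_upwards [hf] with ω hω
    rcases hω with h | h <;> simp [Set.indicator_apply, h]
  have hindmem : ∀ (A : Set Ω') (hA : MeasurableSet A),
      (indicatorConstLp 1 hA (measure_ne_top η A) (1:ℝ)) ∈ S := by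
    intro A hA
    filter_upwards [indicatorConstLp_coeFn (p := 1) (μ := η) (hs := hA)
      (hμs := measure_ne_top η A) (c := (1:ℝ))] with ω h
    rw [h]
    by_cases hω : ω ∈ A <;> simp [Set.indicator_apply, hω]
  -- closedness of S
  have hScl : IsClosed S := by
    refine IsSeqClosed.isClosed ?_
    intro fk f hfk hlim
    obtain ⟨ns, -, h2⟩ := (tendstoInMeasure_of_tendsto_Lp hlim).exists_seq_tendsto_ae
    have h3 : ∀ᵐ ω ∂η, ∀ k, ((fk (ns k) : Lp ℝ 1 η) : Ω' → ℝ) ω = 0 ∨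
        ((fk (ns k) : Lp ℝ 1 η) : Ω' → ℝ) ω = 1 := ae_all_iff.mpr fun k => hfk (ns k)
    filter_upwards [h2, h3] with ω hω1 hω2
    have hcl : IsClosed ({0, 1} : Set ℝ) := (Set.toFinite _).isClosed
    have : (f : Ω' → ℝ) ω ∈ ({0, 1} : Set ℝ) :=
      hcl.mem_of_tendsto hω1 (Eventually.of_forall fun k => by
        rcases hω2 k with h | h <;> simp [h])
    simpa using this
  -- continuity of Φ n on S
  have hcont : ∀ n, Continuous (fun f : S => Φ n (f : Lp ℝ 1 η)) := by
    intro n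
    rw [Metric.continuous_iff]
    rintro ⟨g, hg⟩ b hb
    obtain ⟨δ, hδ, hδ'⟩ := (memLp_one_iff_integrable.mpr (hξ n)).eLpNorm_indicator_le le_rfl
      ENNReal.one_ne_top (half_pos hb)
    refine ⟨δ, hδ, ?_⟩
    rintro ⟨f, hf⟩ hdist
    set D : Set Ω' := {ω | (f : Ω' → ℝ) ω ≠ (g : Ω' → ℝ) ω} with hDdef
    have hDmeas : MeasurableSet D :=
      (measurableSet_eq_fun (Lp.stronglyMeasurable f).measurable
        (Lp.stronglyMeasurable g).measurable).compl
    have hηD : η D ≤ ENNReal.ofReal δ := by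
      have hD1 : η D ≤ eLpNorm ((f : Ω' → ℝ) - (g : Ω' → ℝ)) 1 η := by
        rw [eLpNorm_one_eq_lintegral_enorm]
        have hDe : η D = ∫⁻ ω, D.indicator (fun _ => (1:ℝ≥0∞)) ω ∂η := by
          rw [lintegral_indicator hDmeas]; simp
        rw [hDe]
        refine lintegral_mono_ae ?_
        filter_upwards [hf, hg] with ω h1 h2
        by_cases hω : ω ∈ D
        · simp only [Set.indicator_of_mem hω]
          have habs : (1:ℝ) ≤ ‖(f : Ω' → ℝ) ω - (g : Ω' → ℝ) ω‖ := by
            have hne : (f : Ω' → ℝ) ω ≠ (g : Ω' → ℝ) ω := hω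
            rcases h1 with h1 | h1 <;> rcases h2 with h2 | h2 <;>
              rw [h1, h2] at hne ⊢ <;>
              first
              | exact absurd rfl hne
              | norm_num [Real.norm_eq_abs]
          calc (1:ℝ≥0∞) = ENNReal.ofReal 1 := by simp
            _ ≤ ENNReal.ofReal ‖(f : Ω' → ℝ) ω - (g : Ω' → ℝ) ω‖ := ENNReal.ofReal_le_ofReal habs
            _ = (‖(f : Ω' → ℝ) ω - (g : Ω' → ℝ) ω‖ₑ : ℝ≥0∞) := ofReal_norm _
            _ = ‖((f : Ω' → ℝ) - (g : Ω' → ℝ)) ω‖ₑ := by simp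
        · simp [Set.indicator_of_notMem hω]
      calc η D ≤ eLpNorm ((f : Ω' → ℝ) - (g : Ω' → ℝ)) 1 η := hD1
        _ = eLpNorm (⇑(f - g)) 1 η := (eLpNorm_congr_ae (Lp.coeFn_sub f g)).symm
        _ = ENNReal.ofReal ‖f - g‖ := by
            rw [Lp.norm_def, ENNReal.ofReal_toReal (Lp.eLpNorm_ne_top _)]
        _ ≤ ENNReal.ofReal δ := by
            refine ENNReal.ofReal_le_ofReal ?_
            rw [← dist_eq_norm]
            rw [Subtype.dist_eq] at hdist
            exact hdist.le
    have key : |Φ n f - Φ n g| ≤ b/2 := by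
      have h0 : Φ n f - Φ n g = ∫ ω, ξ n ω * ((f : Ω' → ℝ) ω - (g : Ω' → ℝ) ω) ∂η := by
        rw [hΦdef]
        simp only
        rw [← integral_sub (hSint n f hf) (hSint n g hg)]
        congr 1
        ext ω
        ring
      rw [h0]
      have hintD : Integrable (D.indicator (ξ n)) η := (hξ n).indicator hDmeas
      have hint2 : Integrable (fun ω => ξ n ω * ((f : Ω' → ℝ) ω - (g : Ω' → ℝ) ω)) η := by
        have := (hSint n f hf).sub (hSint n g hg)
        simpa [mul_sub, Pi.sub_def] using this
      have h1 : |∫ ω, ξ n ω * ((f : Ω' → ℝ) ω - (g : Ω' → ℝ) ω) ∂η| ≤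
          ∫ ω, |D.indicator (ξ n) ω| ∂η := by
        have hnorm := norm_integral_le_integral_norm (μ := η)
          (fun ω => ξ n ω * ((f : Ω' → ℝ) ω - (g : Ω' → ℝ) ω))
        rw [Real.norm_eq_abs] at hnorm
        refine hnorm.trans (integral_mono_ae hint2.norm hintD.abs ?_)
        filter_upwards [hf, hg] with ω h1 h2
        simp only [Real.norm_eq_abs]
        by_cases hω : ω ∈ D
        · rw [Set.indicator_of_mem hω]
          have hb1 : |(f : Ω' → ℝ) ω - (g : Ω' → ℝ) ω| ≤ 1 := by
            rcases h1 with h1 | h1 <;> rcases h2 with h2 | h2 <;> rw [h1, h2] <;> norm_num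
          rw [abs_mul]
          calc |ξ n ω| * |(f : Ω' → ℝ) ω - (g : Ω' → ℝ) ω| ≤ |ξ n ω| * 1 :=
            mul_le_mul_of_nonneg_left hb1 (abs_nonneg _)
            _ = |ξ n ω| := mul_one _
        · have hfg : (f : Ω' → ℝ) ω = (g : Ω' → ℝ) ω := not_not.mp hω
          rw [Set.indicator_of_notMem hω, hfg]
          simp
      refine h1.trans ?_
      exact integral_abs_le_of_eLpNorm_le hintD (half_pos hb).le (hδ' D hDmeas hηD)
    rw [Real.dist_eq]
    exact lt_of_le_of_lt key (half_lt_self hb)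
  -- pointwise convergence on S
  have hptS : ∀ f : Lp ℝ 1 η, f ∈ S → Tendsto (fun n => Φ n f) atTop (𝓝 0) := by
    intro f hf
    have hfun : (fun n => Φ n f) = fun n => ∫ ω in {ω | (f : Ω' → ℝ) ω = 1}, ξ n ω ∂η :=
      funext fun n => hΦeq n f hf
    rw [hfun]
    exact hset _ ((Lp.stronglyMeasurable f).measurable (measurableSet_singleton 1))
  -- Baire category
  haveI : Nonempty S := ⟨⟨0, by
    filter_upwards [Lp.coeFn_zero (E := ℝ) (p := 1) (μ := η)] with ω h
    left; simpa using h⟩⟩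
  haveI : CompleteSpace S := hScl.completeSpace_coe
  set F : ℕ → Set S := fun N => {f : S | ∀ n, N ≤ n →
    |Φ n (f : Lp ℝ 1 η) - Φ N (f : Lp ℝ 1 η)| ≤ e} with hFdef
  have hFcl : ∀ N, IsClosed (F N) := by
    intro N
    have hrw : F N = ⋂ n, {f : S | N ≤ n → |Φ n (f : Lp ℝ 1 η) - Φ N (f : Lp ℝ 1 η)| ≤ e} := by
      ext f; simp [hFdef, Set.mem_iInter]
    rw [hrw]
    refine isClosed_iInter fun n => ?_
    by_cases h : N ≤ n
    · simp only [h, true_implies]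
      exact isClosed_le (Continuous.abs ((hcont n).sub (hcont N))) continuous_const
    · simp only [h, false_implies, Set.setOf_true]
      exact isClosed_univ
  have hFcov : ⋃ N, F N = Set.univ := by
    ext f
    simp only [Set.mem_iUnion, Set.mem_univ, iff_true]
    have hf := hptS (f : Lp ℝ 1 η) f.2
    rw [Metric.tendsto_atTop] at hf
    obtain ⟨N, hN⟩ := hf (e/2) (by positivity)
    refine ⟨N, fun n hn => ?_⟩
    have h1 := hN n hn
    have h2 := hN N le_rfl
    rw [Real.dist_eq, sub_zero] at h1 h2
    have h3 := abs_sub_le (Φ n (f : Lp ℝ 1 η)) 0 (Φ N (f : Lp ℝ 1 η))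
    simp only [sub_zero, zero_sub, abs_neg] at h3
    linarith
  obtain ⟨N, hN⟩ := nonempty_interior_of_iUnion_of_closed hFcl hFcov
  obtain ⟨f₀, hf₀⟩ := hN
  obtain ⟨r, hr, hball⟩ := Metric.isOpen_iff.mp isOpen_interior f₀ hf₀
  have hballF : Metric.ball f₀ r ⊆ F N := hball.trans interior_subset
  set A₀ : Set Ω' := {ω | ((f₀ : Lp ℝ 1 η) : Ω' → ℝ) ω = 1} with hA₀def
  have hA₀ : MeasurableSet A₀ :=
    (Lp.stronglyMeasurable (f₀ : Lp ℝ 1 η)).measurable (measurableSet_singleton 1)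
  have hf₀ind : ((f₀ : Lp ℝ 1 η) : Ω' → ℝ) =ᵐ[η] A₀.indicator (fun _ => 1) := by
    filter_upwards [f₀.2] with ω h
    rcases h with h | h <;> simp [Set.indicator_apply, hA₀def, h]
  obtain ⟨δ', hδ'pos, hδ'⟩ := fin_uac ξ hξ N he0
  refine ⟨min δ' (r/2), lt_min hδ'pos (by positivity), ?_⟩
  intro n A hA hAδ
  have hAδ' : η A ≤ ENNReal.ofReal δ' := hAδ.trans (ENNReal.ofReal_le_ofReal (min_le_left _ _))
  have hAr : η A ≤ ENNReal.ofReal (r/2) := hAδ.trans (ENNReal.ofReal_le_ofReal (min_le_right _ _))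
  have hsmall : ∀ m ≤ N, |∫ ω in A, ξ m ω ∂η| ≤ e := by
    intro m hm
    have h2 := integral_abs_le_of_eLpNorm_le ((hξ m).indicator hA) he0.le (hδ' m hm A hA hAδ')
    have h3 : ∫ ω in A, |ξ m ω| ∂η ≤ e := by
      rw [← integral_indicator hA]
      refine le_trans (le_of_eq (integral_congr_ae (Eventually.of_forall fun ω => ?_))) h2
      by_cases hω : ω ∈ A <;> simp [Set.indicator_apply, hω]
    calc |∫ ω in A, ξ m ω ∂η| ≤ ∫ ω in A, |ξ m ω| ∂η := by
          simpa [Real.norm_eq_abs] using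
            norm_integral_le_integral_norm (μ := η.restrict A) (ξ m)
      _ ≤ e := h3
  rcases le_or_gt n N with hn | hn
  · exact (hsmall n hn).trans (by rw [he]; linarith)
  · set f₁ : Lp ℝ 1 η := indicatorConstLp 1 (hA₀.union hA) (measure_ne_top η _) (1:ℝ) with hf₁def
    set f₂ : Lp ℝ 1 η := indicatorConstLp 1 (hA₀.diff hA) (measure_ne_top η _) (1:ℝ) with hf₂def
    have hf₁S : f₁ ∈ S := hindmem _ _
    have hf₂S : f₂ ∈ S := hindmem _ _
    have hdist : ∀ (B : Set Ω') (f : Lp ℝ 1 η) (hfS : f ∈ S),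
        ((f : Ω' → ℝ) =ᵐ[η] B.indicator (fun _ => 1)) →
        (∀ ω, |B.indicator (fun _ => (1:ℝ)) ω - A₀.indicator (fun _ => (1:ℝ)) ω| ≤
          |A.indicator (fun _ => (1:ℝ)) ω|) →
        dist (⟨f, hfS⟩ : S) f₀ < r := by
      intro B f hfS hfB hpt
      rw [Subtype.dist_eq, dist_eq_norm, Lp.norm_def]
      have hcoe : ⇑(f - (f₀ : Lp ℝ 1 η)) =ᵐ[η]
          B.indicator (fun _ => (1:ℝ)) - A₀.indicator (fun _ => 1) := by
        filter_upwards [Lp.coeFn_sub f (f₀ : Lp ℝ 1 η), hfB, hf₀ind] with ω h1 h2 h3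
        rw [h1]
        simp only [Pi.sub_apply]
        rw [h2, h3]
      have hc : eLpNorm (⇑(f - (f₀ : Lp ℝ 1 η))) 1 η ≤ ENNReal.ofReal (r/2) := by
        rw [eLpNorm_congr_ae hcoe]
        refine (eLpNorm_mono (g := A.indicator (fun _ => (1:ℝ)))
          (fun ω => by simpa [Real.norm_eq_abs, Pi.sub_apply] using hpt ω)).trans ?_
        rw [eLpNorm_indicator_const hA one_ne_zero ENNReal.one_ne_top]
        simpa using hAr
      calc (eLpNorm (⇑(f - (f₀ : Lp ℝ 1 η))) 1 η).toReal
          ≤ (ENNReal.ofReal (r/2)).toReal := ENNReal.toReal_mono ENNReal.ofReal_ne_top hc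
        _ = r/2 := ENNReal.toReal_ofReal (by positivity)
        _ < r := by linarith
    have hd₁ : dist (⟨f₁, hf₁S⟩ : S) f₀ < r := by
      refine hdist (A₀ ∪ A) f₁ hf₁S indicatorConstLp_coeFn fun ω => ?_
      by_cases h1 : ω ∈ A₀ <;> by_cases h2 : ω ∈ A <;>
        simp [Set.indicator_apply, Set.mem_union, h1, h2]
    have hd₂ : dist (⟨f₂, hf₂S⟩ : S) f₀ < r := by
      refine hdist (A₀ \ A) f₂ hf₂S indicatorConstLp_coeFn fun ω => ?_
      by_cases h1 : ω ∈ A₀ <;> by_cases h2 : ω ∈ A <;>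
        simp [Set.indicator_apply, Set.mem_diff, h1, h2]
    have hF₁ : (⟨f₁, hf₁S⟩ : S) ∈ F N := hballF (Metric.mem_ball.mpr hd₁)
    have hF₂ : (⟨f₂, hf₂S⟩ : S) ∈ F N := hballF (Metric.mem_ball.mpr hd₂)
    have e1 : |Φ n f₁ - Φ N f₁| ≤ e := hF₁ n hn.le
    have e2 : |Φ n f₂ - Φ N f₂| ≤ e := hF₂ n hn.le
    have hid : ∀ m, ∫ ω in A, ξ m ω ∂η = Φ m f₁ - Φ m f₂ := by
      intro m
      have hΦ₁ : Φ m f₁ = ∫ ω in A₀ ∪ A, ξ m ω ∂η :=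
        hΦind m _ (hA₀.union hA) f₁ indicatorConstLp_coeFn
      have hΦ₂ : Φ m f₂ = ∫ ω in A₀ \ A, ξ m ω ∂η :=
        hΦind m _ (hA₀.diff hA) f₂ indicatorConstLp_coeFn
      have hsplit : ∫ ω in A₀ ∪ A, ξ m ω ∂η =
          ∫ ω in A₀ \ A, ξ m ω ∂η + ∫ ω in A, ξ m ω ∂η := by
        rw [← setIntegral_union disjoint_sdiff_self_left hA ((hξ m).integrableOn)
          ((hξ m).integrableOn), Set.diff_union_self]
      rw [hΦ₁, hΦ₂, hsplit]
      ring
    have e3 : |Φ N f₁ - Φ N f₂| ≤ e := by rw [← hid N]; exact hsmall N le_rfl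
    rw [hid n]
    rw [abs_le] at e1 e2 e3 ⊢
    constructor <;> [linarith [e1.1, e2.2, e3.1]; linarith [e1.2, e2.1, e3.2]]

lemma step1_pos (ξ : ℕ → Ω' → ℝ) (hξ : ∀ n, Integrable (ξ n) η)
    (hm : ∀ n, StronglyMeasurable (ξ n))
    (hset : ∀ A : Set Ω', MeasurableSet A → Tendsto (fun n => ∫ ω in A, ξ n ω ∂η) atTop (𝓝 0))
    (G : Ω' → ℝ) (hG : StronglyMeasurable G)
    (haeG : ∀ᵐ ω ∂η, Tendsto (fun n => ξ n ω) atTop (𝓝 (G ω)))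
    {c : ℝ} (hc : 0 < c) : η {ω | c ≤ G ω} = 0 := by
  have key : ∀ ε : ℝ, 0 < ε → η {ω | c ≤ G ω} ≤ ENNReal.ofReal ε := by
    intro ε hε
    obtain ⟨t, htm, htμ, hunif⟩ := tendstoUniformlyOn_of_ae_tendsto' hm hG haeG hε
    set A : Set Ω' := {ω | c ≤ G ω} ∩ tᶜ with hAdef
    have hA : MeasurableSet A := (measurableSet_le measurable_const hG.measurable).inter htm.compl
    have hAlim := hset A hA
    have hev : ∀ᶠ n in atTop, (c/2) * (η A).toReal ≤ ∫ ω in A, ξ n ω ∂η := by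
      have h1 := (Metric.tendstoUniformlyOn_iff.mp hunif) (c/2) (by positivity)
      filter_upwards [h1] with n hn
      refine setIntegral_ge_of_const_le_real hA (measure_ne_top η A) ?_ ((hξ n).integrableOn)
      intro ω hω
      have h2 := hn ω hω.2
      rw [Real.dist_eq] at h2
      have h3 : c ≤ G ω := hω.1
      have h4 := abs_lt.mp h2
      linarith [h4.1, h4.2]
    have h0 : (c/2) * (η A).toReal ≤ 0 := ge_of_tendsto hAlim hev
    have h4 : (η A).toReal = 0 := by
      have hnn : 0 ≤ (η A).toReal := ENNReal.toReal_nonneg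
      nlinarith
    have h5 : η A = 0 := by
      rcases (ENNReal.toReal_eq_zero_iff _).mp h4 with h | h
      · exact h
      · exact absurd h (measure_ne_top η A)
    have hsub : {ω | c ≤ G ω} ⊆ A ∪ t := by
      intro ω hω
      by_cases ht : ω ∈ t
      · exact Or.inr ht
      · exact Or.inl ⟨hω, ht⟩
    calc η {ω | c ≤ G ω} ≤ η (A ∪ t) := measure_mono hsub
      _ ≤ η A + η t := measure_union_le _ _
      _ = η t := by rw [h5, zero_add]
      _ ≤ ENNReal.ofReal ε := htμ
  refine nonpos_iff_eq_zero.mp (ENNReal.le_of_forall_pos_le_add fun ε' hε' _ => ?_)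
  have h := key (ε' : ℝ) (by exact_mod_cast hε')
  simpa [ENNReal.ofReal_coe_nnreal] using h

lemma step1 (ξ : ℕ → Ω' → ℝ) (hξ : ∀ n, Integrable (ξ n) η)
    (hm : ∀ n, StronglyMeasurable (ξ n))
    (hset : ∀ A : Set Ω', MeasurableSet A → Tendsto (fun n => ∫ ω in A, ξ n ω ∂η) atTop (𝓝 0))
    (G : Ω' → ℝ) (hG : StronglyMeasurable G)
    (haeG : ∀ᵐ ω ∂η, Tendsto (fun n => ξ n ω) atTop (𝓝 (G ω))) : G =ᵐ[η] 0 := by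
  have hpos : ∀ c : ℝ, 0 < c → η {ω | c ≤ G ω} = 0 := fun c hc =>
    step1_pos ξ hξ hm hset G hG haeG hc
  have hneg : ∀ c : ℝ, 0 < c → η {ω | G ω ≤ -c} = 0 := by
    intro c hc
    have h1 := step1_pos (fun n => -ξ n) (fun n => (hξ n).neg) (fun n => (hm n).neg)
      (fun A hA => by
        have := (hset A hA).neg
        simpa [integral_neg] using this)
      (-G) hG.neg (by filter_upwards [haeG] with ω h using h.neg) hc
    have hsets : {ω | G ω ≤ -c} = {ω | c ≤ (-G) ω} := by
      ext ω; simp only [Set.mem_setOf_eq, Pi.neg_apply, le_neg]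
    rwa [hsets]
  have hnull : η {ω | G ω ≠ 0} = 0 := by
    have hsub : {ω | G ω ≠ 0} ⊆
        ⋃ k : ℕ, ({ω | (1:ℝ)/(k+1) ≤ G ω} ∪ {ω | G ω ≤ -((1:ℝ)/(k+1))}) := by
      intro ω hω
      rcases lt_or_gt_of_ne hω with h | h
      · obtain ⟨k, hk⟩ := exists_nat_one_div_lt (show (0:ℝ) < -G ω by linarith)
        exact Set.mem_iUnion.mpr ⟨k, Or.inr (by
          simp only [Set.mem_setOf_eq]; push_cast at hk ⊢; linarith)⟩
      · obtain ⟨k, hk⟩ := exists_nat_one_div_lt (show (0:ℝ) < G ω by linarith)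
        exact Set.mem_iUnion.mpr ⟨k, Or.inl (by
          simp only [Set.mem_setOf_eq]; push_cast at hk ⊢; linarith)⟩
    refine measure_mono_null hsub (measure_iUnion_null fun k => ?_)
    have hck : (0:ℝ) < 1/(k+1) := by positivity
    exact measure_union_null (hpos _ hck) (hneg _ hck)
  rw [Filter.EventuallyEq, ae_iff]
  simpa using hnull

lemma eLpNorm_le_of_integral_abs {h : Ω' → ℝ} (hint : Integrable h η) {ε : ℝ}
    (hle : ∫ ω, |h ω| ∂η ≤ ε) : eLpNorm h 1 η ≤ ENNReal.ofReal ε := by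
  rw [eLpNorm_one_eq_lintegral_enorm, ← ofReal_integral_norm_eq_lintegral_enorm hint]
  exact ENNReal.ofReal_le_ofReal (by simpa [Real.norm_eq_abs] using hle)

lemma ui (ξ : ℕ → Ω' → ℝ) (hm : ∀ n, StronglyMeasurable (ξ n)) (hξ : ∀ n, Integrable (ξ n) η)
    (hset : ∀ A : Set Ω', MeasurableSet A → Tendsto (fun n => ∫ ω in A, ξ n ω ∂η) atTop (𝓝 0)) :
    UnifIntegrable ξ 1 η := by
  intro ε hε
  obtain ⟨δ, hδ, h⟩ := uac ξ hm hξ hset (ε := ε/2) (by positivity)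
  refine ⟨δ, hδ, fun n A hA hAδ => ?_⟩
  have key : ∫ ω in A, |ξ n ω| ∂η ≤ ε := by
    set Ap := A ∩ {ω | 0 ≤ ξ n ω} with hApdef
    set Am := A ∩ {ω | ξ n ω < 0} with hAmdef
    have hApm : MeasurableSet Ap := hA.inter (measurableSet_le measurable_const (hm n).measurable)
    have hAmm : MeasurableSet Am := hA.inter (measurableSet_lt (hm n).measurable measurable_const)
    have hdisj : Disjoint Ap Am := by
      refine Set.disjoint_left.mpr ?_
      rintro ω ⟨-, h1⟩ ⟨-, h2⟩
      simp only [Set.mem_setOf_eq] at h1 h2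
      linarith
    have hcover : Ap ∪ Am = A := by
      rw [hApdef, hAmdef, ← Set.inter_union_distrib_left]
      have huniv : {ω | 0 ≤ ξ n ω} ∪ {ω | ξ n ω < 0} = Set.univ := by
        ext ω; simp [le_or_gt]
      rw [huniv, Set.inter_univ]
    have h1 : ∫ ω in A, |ξ n ω| ∂η = ∫ ω in Ap, |ξ n ω| ∂η + ∫ ω in Am, |ξ n ω| ∂η := by
      rw [← hcover, setIntegral_union hdisj hAmm ((hξ n).abs.integrableOn)
        ((hξ n).abs.integrableOn)]
    have h2 : ∫ ω in Ap, |ξ n ω| ∂η = ∫ ω in Ap, ξ n ω ∂η :=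
      setIntegral_congr_fun hApm (fun ω hω => abs_of_nonneg hω.2)
    have h3 : ∫ ω in Am, |ξ n ω| ∂η = - ∫ ω in Am, ξ n ω ∂η := by
      rw [← integral_neg]
      exact setIntegral_congr_fun hAmm (fun ω hω => abs_of_neg hω.2)
    have hp := h n Ap hApm (le_trans (measure_mono Set.inter_subset_left) hAδ)
    have hq := h n Am hAmm (le_trans (measure_mono Set.inter_subset_left) hAδ)
    have hp' := abs_le.mp hp
    have hq' := abs_le.mp hq
    rw [h1, h2, h3]
    linarith [hp'.1, hp'.2, hq'.1, hq'.2]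
  have key2 : ∫ ω, |A.indicator (ξ n) ω| ∂η ≤ ε := by
    have heqf : (fun ω => |A.indicator (ξ n) ω|) = A.indicator (fun ω => |ξ n ω|) :=
      funext fun ω => by by_cases hω : ω ∈ A <;> simp [Set.indicator_apply, hω]
    rw [heqf, integral_indicator hA]
    exact key
  exact eLpNorm_le_of_integral_abs ((hξ n).indicator hA) key2


end Statement11Aux

set_option maxHeartbeats 1000000 in
set_option synthInstance.maxHeartbeats 1000000 in
/-- if `{ξₙ} ⊆ L¹(η)` is weakly null and converges a.e. to `g₀`, then `g₀ = 0`
a.e. and `ξₙ → 0` in the norm of `L¹(η)`. -/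
theorem statement11
    {Ω : Type*} [MeasurableSpace Ω] (η : Measure Ω) [IsFiniteMeasure η]
    (ξ : ℕ → Ω → ℝ) (hξ : ∀ n, Integrable (ξ n) η)
    (hwn : ∀ g : Ω → ℝ, Measurable g → (∃ C : ℝ, ∀ ω, |g ω| ≤ C) →
      Tendsto (fun n => ∫ ω, ξ n ω * g ω ∂η) atTop (nhds 0))
    (g₀ : Ω → ℝ)
    (hae : ∀ᵐ ω ∂η, Tendsto (fun n => ξ n ω) atTop (nhds (g₀ ω))) :
    g₀ =ᵐ[η] 0 ∧ Tendsto (fun n => ∫ ω, |ξ n ω| ∂η) atTop (nhds 0) := by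
  haveI : Fact ((1:ℝ≥0∞) ≤ 1) := ⟨le_rfl⟩
  have hsm : ∀ n, AEStronglyMeasurable (ξ n) η := fun n => (hξ n).1
  set ξ' : ℕ → Ω → ℝ := fun n => (hsm n).mk (ξ n) with hξ'def
  have hm' : ∀ n, StronglyMeasurable (ξ' n) := fun n => (hsm n).stronglyMeasurable_mk
  have heq : ∀ n, ξ n =ᵐ[η] ξ' n := fun n => (hsm n).ae_eq_mk
  have heq' : ∀ᵐ ω ∂η, ∀ n, ξ n ω = ξ' n ω := ae_all_iff.mpr heq
  have hξ' : ∀ n, Integrable (ξ' n) η := fun n => (hξ n).congr (heq n)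
  have hset : ∀ A : Set Ω, MeasurableSet A →
      Tendsto (fun n => ∫ ω in A, ξ' n ω ∂η) atTop (𝓝 0) := by
    intro A hA
    have hg : Measurable (A.indicator fun _ => (1:ℝ)) := measurable_const.indicator hA
    have hb : ∃ C : ℝ, ∀ ω, |A.indicator (fun _ => (1:ℝ)) ω| ≤ C :=
      ⟨1, fun ω => by by_cases h : ω ∈ A <;> simp [Set.indicator_apply, h]⟩
    have h1 := hwn _ hg hb
    have h2 : ∀ n, ∫ ω, ξ n ω * A.indicator (fun _ => (1:ℝ)) ω ∂η = ∫ ω in A, ξ' n ω ∂η := by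
      intro n
      rw [← integral_indicator hA]
      refine integral_congr_ae ?_
      filter_upwards [heq n] with ω hω
      by_cases h : ω ∈ A <;> simp [Set.indicator_apply, h, hω]
    rw [show (fun n => ∫ ω in A, ξ' n ω ∂η)
        = fun n => ∫ ω, ξ n ω * A.indicator (fun _ => (1:ℝ)) ω ∂η from
      funext fun n => (h2 n).symm]
    exact h1
  have hGae : AEMeasurable g₀ η :=
    aemeasurable_of_tendsto_metrizable_ae' (fun n => (hsm n).aemeasurable) hae
  set G := hGae.mk g₀ with hGdef
  have hGm : StronglyMeasurable G := hGae.measurable_mk.stronglyMeasurable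
  have hg₀G : g₀ =ᵐ[η] G := hGae.ae_eq_mk
  have haeG : ∀ᵐ ω ∂η, Tendsto (fun n => ξ' n ω) atTop (𝓝 (G ω)) := by
    filter_upwards [hae, hg₀G, heq'] with ω h1 h2 h3
    rw [← h2]
    exact h1.congr fun n => h3 n
  have hG0 : G =ᵐ[η] 0 := step1 ξ' hξ' hm' hset G hGm haeG
  have hg₀0 : g₀ =ᵐ[η] 0 := hg₀G.trans hG0
  refine ⟨hg₀0, ?_⟩
  have hae0 : ∀ᵐ ω ∂η, Tendsto (fun n => ξ' n ω) atTop (𝓝 0) := by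
    filter_upwards [haeG, hG0] with ω h1 h2
    simp only [Pi.zero_apply] at h2
    rwa [h2] at h1
  have hui : UnifIntegrable ξ' 1 η := ui ξ' hm' hξ' hset
  have hvit := tendsto_Lp_finite_of_tendsto_ae (μ := η) le_rfl ENNReal.one_ne_top
    (fun n => (hm' n).aestronglyMeasurable) (MemLp.zero' (p := 1) (μ := η)) hui
    (by simpa using hae0)
  have hvit' : Tendsto (fun n => eLpNorm (ξ' n) 1 η) atTop (𝓝 0) := by simpa [Pi.sub_def] using hvit
  have htoReal : Tendsto (fun n => (eLpNorm (ξ' n) 1 η).toReal) atTop (𝓝 0) := by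
    have := (ENNReal.tendsto_toReal (by norm_num : (0:ℝ≥0∞) ≠ ∞)).comp hvit'
    simpa [Function.comp_def] using this
  refine htoReal.congr fun n => ?_
  have h1 : ∫ ω, |ξ n ω| ∂η = ∫ ω, ‖ξ' n ω‖ ∂η :=
    integral_congr_ae (by filter_upwards [heq n] with ω h using by rw [Real.norm_eq_abs, h])
  rw [eLpNorm_one_eq_lintegral_enorm, ← ofReal_integral_norm_eq_lintegral_enorm (hξ' n),
    ENNReal.toReal_ofReal (integral_nonneg fun ω => norm_nonneg _), h1]


end Paper
end
end

section
/- Let (Ω,Σ,μ) be a finite measure space such that the pseudometric space (Σ, d_μ), d_μ(A,B) := μ(A △ B), is separable. Let X be a Banach space and m : Σ → X a σ-additive vector measure such that m(B) = 0 for every B ∈ Σ with μ(B) = 0. Then the pseudometric space (Σ, d_m), d_m(A,B) := ‖m‖(A △ B), is separable; that is, m is a separable vector measure. -/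
open MeasureTheory Filter Topology
open scoped ENNReal

noncomputable section

namespace Paper

variable {Ω : Type*} [MeasurableSpace Ω]
variable {X : Type*} [NormedAddCommGroup X] [NormedSpace ℝ X]

variable {S : Type*} [MeasurableSpace S] {μ : Measure S}

set_option linter.unusedSectionVars false in
/-- Norm continuity of a vector measure along antitone sequences. -/
lemma vm_tendsto_iInter (m : VectorMeasure Ω X) (A : ℕ → Set Ω)
    (hA : ∀ n, MeasurableSet (A n)) (hmono : Antitone A) :
    Tendsto (fun n => m (A n)) atTop (𝓝 (m (⋂ n, A n))) := by
  set C := ⋂ n, A n with hC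
  have hCm : MeasurableSet C := MeasurableSet.iInter hA
  have hCsub : ∀ n, C ⊆ A n := fun n => Set.iInter_subset A n
  set D : ℕ → Set Ω := fun k => A k \ A (k + 1) with hD
  have hDm : ∀ k, MeasurableSet (D k) := fun k => (hA k).diff (hA (k + 1))
  have hDkey : ∀ i j, i < j → Disjoint (D i) (D j) := fun i j h =>
    Set.disjoint_left.mpr fun x hxi hxj => hxi.2 (hmono (by omega) hxj.1)
  have hDdisj : Pairwise (Function.onFun Disjoint D) := by
    intro i j hij
    rcases hij.lt_or_gt with h | h
    · exact hDkey i j h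
    · exact (hDkey j i h).symm
  have hUD : (⋃ k, D k) = A 0 \ C := by
    ext x
    constructor
    · rintro ⟨_, ⟨k, rfl⟩, hx⟩
      exact ⟨hmono (Nat.zero_le k) hx.1, fun hxC => hx.2 (hCsub (k + 1) hxC)⟩
    · rintro ⟨hx0, hxC⟩
      have hex : ∃ n, x ∉ A n := by
        by_contra h; push_neg at h; exact hxC (Set.mem_iInter.mpr h)
      classical
      set n := Nat.find hex with hn
      have hnn : x ∉ A n := Nat.find_spec hex
      have hpos : n ≠ 0 := fun h => hnn (h ▸ hx0)
      have hprev : x ∈ A (n - 1) := by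
        by_contra h
        have h2 : Nat.find hex ≤ n - 1 := Nat.find_le h
        omega
      exact Set.mem_iUnion.mpr ⟨n - 1, hprev, by
        have : n - 1 + 1 = n := by omega
        rw [this]; exact hnn⟩
  have hsum : HasSum (fun k => m (D k)) (m (A 0 \ C)) := by
    rw [← hUD]; exact m.m_iUnion hDm hDdisj
  have hpart : ∀ n, (∑ k ∈ Finset.range n, m (D k)) = m (A 0 \ A n) := by
    intro n
    induction n with
    | zero => simp
    | succ n ih =>
      rw [Finset.sum_range_succ, ih]
      have hdisj : Disjoint (A 0 \ A n) (D n) :=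
        Set.disjoint_left.mpr fun x hx hxD => hx.2 hxD.1
      have hun : (A 0 \ A n) ∪ D n = A 0 \ A (n + 1) := by
        ext x
        constructor
        · rintro (⟨h0, hn⟩ | ⟨hn, hn1⟩)
          · exact ⟨h0, fun h => hn (hmono (Nat.le_succ n) h)⟩
          · exact ⟨hmono (Nat.zero_le n) hn, hn1⟩
        · rintro ⟨h0, hn1⟩
          by_cases hn : x ∈ A n
          · exact Or.inr ⟨hn, hn1⟩
          · exact Or.inl ⟨h0, hn⟩
      rw [← hun, m.of_union hdisj ((hA 0).diff (hA n)) (hDm n)]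
  have hAn : ∀ n, m (A n) = m (A 0) - ∑ k ∈ Finset.range n, m (D k) := by
    intro n
    rw [hpart n, m.of_diff (hA n) (hA 0) (hmono (Nat.zero_le n))]
    abel
  have hCeq : m C = m (A 0) - m (A 0 \ C) := by
    rw [m.of_diff hCm (hA 0) (hCsub 0)]; abel
  rw [hCeq]
  exact Tendsto.congr (fun n => (hAn n).symm)
    (tendsto_const_nhds.sub hsum.tendsto_sum_nat)

set_option linter.unusedSectionVars false in
lemma key_ac (μ : Measure Ω) [IsFiniteMeasure μ] (m : VectorMeasure Ω X)
    (hm0 : ∀ B : Set Ω, MeasurableSet B → μ B = 0 → m B = 0) {ε : ℝ} (hε : 0 < ε) :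
    ∃ δ : ℝ, 0 < δ ∧ ∀ E : Set Ω, MeasurableSet E → μ E < ENNReal.ofReal δ →
      ∀ F : Set Ω, MeasurableSet F → F ⊆ E → ‖m F‖ ≤ ε := by
  by_contra hcon
  push_neg at hcon
  -- extract sequences
  have hseq : ∀ n : ℕ, ∃ E : Set Ω, MeasurableSet E ∧ μ E < ENNReal.ofReal ((1/2 : ℝ) ^ n) ∧
      ∃ F : Set Ω, MeasurableSet F ∧ F ⊆ E ∧ ε < ‖m F‖ := by
    intro n
    obtain ⟨E, hE, hμE, F, hF, hFE, hnorm⟩ := hcon ((1/2 : ℝ) ^ n) (by positivity)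
    exact ⟨E, hE, hμE, F, hF, hFE, hnorm⟩
  choose E hEm hEμ F hFm hFE hFnorm using hseq
  -- the tail unions
  set B : ℕ → Set Ω := fun n => ⋃ k, E (n + k) with hBdef
  have hBm : ∀ n, MeasurableSet (B n) := fun n => MeasurableSet.iUnion fun k => hEm (n + k)
  have hBsub : ∀ n k, n ≤ k → E k ⊆ B n := by
    intro n k hnk
    have : E k = E (n + (k - n)) := by rw [Nat.add_sub_cancel' hnk]
    rw [this]; exact Set.subset_iUnion (fun i => E (n + i)) (k - n)
  have hBanti : Antitone B := by
    intro a b hab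
    refine Set.iUnion_subset fun k => hBsub a (b + k) (by omega)
  have hBμ : ∀ n, μ (B n) ≤ ENNReal.ofReal ((1/2 : ℝ) ^ n) * 2 := by
    intro n
    calc μ (B n) ≤ ∑' k, μ (E (n + k)) := measure_iUnion_le _
      _ ≤ ∑' k, ENNReal.ofReal ((1/2 : ℝ) ^ (n + k)) :=
          ENNReal.tsum_le_tsum fun k => (hEμ (n + k)).le
      _ = ∑' k, ENNReal.ofReal ((1/2 : ℝ) ^ n) * ENNReal.ofReal ((1/2 : ℝ) ^ k) := by
          congr 1; funext k
          rw [pow_add, ENNReal.ofReal_mul (by positivity)]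
      _ = ENNReal.ofReal ((1/2 : ℝ) ^ n) * ∑' k, ENNReal.ofReal ((1/2 : ℝ) ^ k) :=
          ENNReal.tsum_mul_left
      _ = ENNReal.ofReal ((1/2 : ℝ) ^ n) * 2 := by
          congr 1
          rw [← ENNReal.ofReal_tsum_of_nonneg (fun k => by positivity)
            summable_geometric_two]
          · norm_num [tsum_geometric_two]
  set Bi : Set Ω := ⋂ n, B n with hBi
  have hBim : MeasurableSet Bi := MeasurableSet.iInter hBm
  have hμBi : μ Bi = 0 := by
    have h1 : Tendsto (fun n => ENNReal.ofReal ((1/2 : ℝ) ^ n) * 2) atTop (𝓝 0) := by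
      have : Tendsto (fun n : ℕ => ((1/2 : ℝ) ^ n)) atTop (𝓝 0) :=
        tendsto_pow_atTop_nhds_zero_of_lt_one (by norm_num) (by norm_num)
      have h2 := ENNReal.Tendsto.mul_const (ENNReal.tendsto_ofReal this)
        (Or.inr (ENNReal.ofNat_ne_top (n := 2)))
      simpa using h2
    have hle : ∀ n, μ Bi ≤ ENNReal.ofReal ((1/2 : ℝ) ^ n) * 2 :=
      fun n => le_trans (measure_mono (Set.iInter_subset B n)) (hBμ n)
    exact le_antisymm (ge_of_tendsto' h1 hle) zero_le
  have hmBi : ∀ C : Set Ω, MeasurableSet C → C ⊆ Bi → m C = 0 := fun C hCm hCs =>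
    hm0 C hCm (le_antisymm (hμBi ▸ measure_mono hCs) zero_le)
  have hFsplit : ∀ n, m (F n \ Bi) = m (F n) := by
    intro n
    have h1 : F n \ Bi = F n \ (F n ∩ Bi) := (Set.diff_self_inter).symm
    rw [h1, m.of_diff ((hFm n).inter hBim) (hFm n) Set.inter_subset_left,
      hmBi (F n ∩ Bi) ((hFm n).inter hBim) Set.inter_subset_right, sub_zero]
  have hstep : ∀ n : ℕ, ∃ i : ℕ, n < i ∧ ‖m ((F n \ Bi) ∩ B i)‖ < ε / 2 := by
    intro n
    have hiInter : (⋂ i, (F n \ Bi) ∩ B i) = (∅ : Set Ω) := by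
      rw [← Set.inter_iInter, ← hBi, Set.diff_inter_self]
    have ht : Tendsto (fun i => m ((F n \ Bi) ∩ B i)) atTop (𝓝 0) := by
      have := vm_tendsto_iInter m (fun i => (F n \ Bi) ∩ B i)
        (fun i => ((hFm n).diff hBim).inter (hBm i))
        (fun a b hab => Set.inter_subset_inter_right _ (hBanti hab))
      rwa [hiInter, m.empty] at this
    have h2 : ∀ᶠ i in atTop, ‖m ((F n \ Bi) ∩ B i)‖ < ε / 2 := by
      have := NormedAddCommGroup.tendsto_nhds_zero.mp ht (ε / 2) (half_pos hε)
      simpa using this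
    exact ((eventually_gt_atTop n).and h2).exists
  choose step hstep1 hstep2 using hstep
  set ν : ℕ → ℕ := fun j => step^[j] 0 with hν
  have hνsucc : ∀ j, ν (j + 1) = step (ν j) := fun j => Function.iterate_succ_apply' step j 0
  have hνmono : StrictMono ν := strictMono_nat_of_lt_succ fun j => by
    rw [hνsucc]; exact hstep1 (ν j)
  set G : ℕ → Set Ω := fun j => (F (ν j) \ Bi) \ B (ν (j + 1)) with hG
  have hGm : ∀ j, MeasurableSet (G j) := fun j =>
    (((hFm (ν j)).diff hBim)).diff (hBm (ν (j + 1)))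
  have hGnorm : ∀ j, ε / 2 < ‖m (G j)‖ := by
    intro j
    have hset : G j = (F (ν j) \ Bi) \ ((F (ν j) \ Bi) ∩ B (ν (j + 1))) := by
      rw [Set.diff_self_inter]
    have hmg : m (G j) = m (F (ν j) \ Bi) - m ((F (ν j) \ Bi) ∩ B (ν (j + 1))) := by
      rw [hset, m.of_diff (((hFm (ν j)).diff hBim).inter (hBm (ν (j+1))))
        ((hFm (ν j)).diff hBim) Set.inter_subset_left]
    have h1 : ε < ‖m (F (ν j) \ Bi)‖ := by rw [hFsplit]; exact hFnorm (ν j)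
    have h2 : ‖m ((F (ν j) \ Bi) ∩ B (ν (j + 1)))‖ < ε / 2 := by
      rw [hνsucc]; exact hstep2 (ν j)
    calc ε / 2 < ‖m (F (ν j) \ Bi)‖ - ‖m ((F (ν j) \ Bi) ∩ B (ν (j + 1)))‖ := by linarith
      _ ≤ ‖m (G j)‖ := by rw [hmg]; exact norm_sub_norm_le _ _
  have hGdisj : Pairwise (Function.onFun Disjoint G) := by
    have key : ∀ i j, i < j → Disjoint (G i) (G j) := by
      intro i j hij
      refine Set.disjoint_left.mpr fun x hxi hxj => ?_
      have hx1 : x ∉ B (ν (i + 1)) := hxi.2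
      have hx2 : x ∈ B (ν (i + 1)) := by
        have hsub : E (ν j) ⊆ B (ν (i + 1)) :=
          hBsub (ν (i + 1)) (ν j) (hνmono.monotone (by omega))
        exact hsub (hFE (ν j) hxj.1.1)
      exact hx1 hx2
    intro i j hij
    rcases hij.lt_or_gt with h | h
    · exact key i j h
    · exact (key j i h).symm
  have hsum : Summable fun j => m (G j) := ⟨_, m.m_iUnion hGm hGdisj⟩
  have htz := hsum.tendsto_atTop_zero
  have h2 : ∀ᶠ j in atTop, ‖m (G j)‖ < ε / 2 := by
    have := NormedAddCommGroup.tendsto_nhds_zero.mp htz (ε / 2) (half_pos hε)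
    simpa using this
  obtain ⟨j, hj⟩ := h2.exists
  exact absurd (hGnorm j) (not_lt.mpr hj.le)

lemma dualApply_apply (m : VectorMeasure Ω X) (x : X →L[ℝ] ℝ) (A : Set Ω) :
    dualApply m x A = x (m A) := rfl

lemma tv_bound (m : VectorMeasure Ω X) {x : X →L[ℝ] ℝ} (hx : ‖x‖ ≤ 1)
    {E : Set Ω} (hE : MeasurableSet E) {c : ℝ} (hc : 0 ≤ c)
    (hb : ∀ F : Set Ω, MeasurableSet F → F ⊆ E → ‖m F‖ ≤ c) :
    (dualApply m x).totalVariation E ≤ ENNReal.ofReal (2 * c) := by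
  set s := dualApply m x with hs
  obtain ⟨i, hi₁, hi₂, hi₃, hpos, hneg⟩ := s.toJordanDecomposition_spec
  have hbound : ∀ F : Set Ω, MeasurableSet F → F ⊆ E → |s F| ≤ c := by
    intro F hFm hFE
    rw [hs, dualApply_apply]
    calc |x (m F)| ≤ ‖x‖ * ‖m F‖ := x.le_opNorm _
      _ ≤ 1 * c := mul_le_mul hx (hb F hFm hFE) (norm_nonneg _) zero_le_one
      _ = c := one_mul c
  rw [SignedMeasure.totalVariation, Measure.add_apply, hpos, hneg,
    SignedMeasure.toMeasureOfZeroLE_apply _ hi₂ hi₁ hE,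
    SignedMeasure.toMeasureOfLEZero_apply _ hi₃ hi₁.compl hE]
  have h1 : s (i ∩ E) ≤ c := by
    have := hbound (i ∩ E) (hi₁.inter hE) Set.inter_subset_right
    exact (abs_le.mp this).2
  have h2 : -s (iᶜ ∩ E) ≤ c := by
    have := hbound (iᶜ ∩ E) (hi₁.compl.inter hE) Set.inter_subset_right
    have := (abs_le.mp this).1
    linarith
  have hsum : ENNReal.ofReal c + ENNReal.ofReal c = ENNReal.ofReal (2 * c) := by
    rw [← ENNReal.ofReal_add hc hc]; ring_nf
  rw [← hsum]
  refine add_le_add ?_ ?_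
  · rw [ENNReal.ofReal, ENNReal.coe_le_coe, ← NNReal.coe_le_coe,
      Real.coe_toNNReal c hc, NNReal.coe_mk]
    exact h1
  · rw [ENNReal.ofReal, ENNReal.coe_le_coe, ← NNReal.coe_le_coe,
      Real.coe_toNNReal c hc, NNReal.coe_mk]
    exact h2


/-- if `(Σ, d_μ)` is separable and the σ-additive vector measure `m` vanishes
on `μ`-null sets, then `m` is a separable vector measure. -/
theorem statement14
    {Ω : Type*} [MeasurableSpace Ω] (μ : Measure Ω) [IsFiniteMeasure μ]
    {X : Type*} [NormedAddCommGroup X] [NormedSpace ℝ X]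
    (hμsep : ∃ D : Set (Set Ω), D.Countable ∧ (∀ B ∈ D, MeasurableSet B) ∧
      ∀ A : Set Ω, MeasurableSet A → ∀ ε : ℝ, 0 < ε →
        ∃ B ∈ D, μ (symmDiff A B) < ENNReal.ofReal ε)
    (m : VectorMeasure Ω X)
    (hm0 : ∀ B : Set Ω, MeasurableSet B → μ B = 0 → m B = 0) :
    SeparableVM m := by
  obtain ⟨D, hDcount, hDmeas, hDdense⟩ := hμsep
  refine ⟨D, hDcount, hDmeas, fun A hA ε hε => ?_⟩
  obtain ⟨δ, hδ, hkey⟩ := key_ac μ m hm0 (ε := ε / 4) (by linarith)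
  obtain ⟨B, hBD, hBμ⟩ := hDdense A hA δ hδ
  refine ⟨B, hBD, ?_⟩
  have hABm : MeasurableSet (symmDiff A B) := hA.symmDiff (hDmeas B hBD)
  have hsv : semivar m (symmDiff A B) ≤ ENNReal.ofReal (2 * (ε / 4)) := by
    refine iSup_le fun x => tv_bound m x.2 hABm (by linarith) ?_
    exact hkey (symmDiff A B) hABm hBμ
  calc semivar m (symmDiff A B) ≤ ENNReal.ofReal (2 * (ε / 4)) := hsv
    _ < ENNReal.ofReal ε := by
      rw [ENNReal.ofReal_lt_ofReal_iff hε]; linarith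


end Paper
end
end
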